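/- Let x ≠ y in X and let B = B(x, d(x,y)) be the smallest ball containing both x and y. Then k(d(x,y)) = −λ(B)/m(B) + Σ_T ( 1/m(T) − 1/m(T⁺) )·λ(T⁺), where the sum ranges over all balls T of X with B ⊆ T ⊊ X; that is, the kernel matrix is determined by the eigenvalues λ(·) and the measure m. -/

import Mathlib

open scoped Classical
open Finset

/-- Closed ball of radius `r` around `x`, as a finset. -/
noncomputable def uball {X : Type*} [Fintype X] (d : X → X → ℝ) (x : X) (r : ℝ) : Finset X :=
  Finset.univ.filter fun y => d x y ≤ r

/-- A ball of the ultrametric space: a closed ball of nonnegative radius. -/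
def IsBall {X : Type*} [Fintype X] (d : X → X → ℝ) (B : Finset X) : Prop :=
  ∃ x r, 0 ≤ r ∧ B = uball d x r

/-- Diameter of a finite set: maximum of `d` over `B × B` (`0` if `B` is empty). -/
noncomputable def fdiam {X : Type*} [Fintype X] (d : X → X → ℝ) (B : Finset X) : ℝ :=
  if h : (B ×ˢ B).Nonempty then (B ×ˢ B).sup' h fun p => d p.1 p.2 else 0

/-- Mass of a set: `m(B) = Σ_{x ∈ B} m(x)`. -/
noncomputable def mass {X : Type*} [Fintype X] (m : X → ℝ) (B : Finset X) : ℝ :=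
  ∑ x ∈ B, m x

/-- The eigenvalue attached to a ball `B`, computed from a base point `x₀ ∈ B`:
`λ(B) = −(Σ_{y ∉ B} k(d(x₀,y))·m(y) + k(diam B)·m(B))`. -/
noncomputable def lamB {X : Type*} [Fintype X] [DecidableEq X]
    (d : X → X → ℝ) (k : ℝ → ℝ) (m : X → ℝ) (B : Finset X) (x₀ : X) : ℝ :=
  -((∑ y ∈ Bᶜ, k (d x₀ y) * m y) + k (fdiam d B) * mass m B)

/-- The parent radius of a ball `B ⊊ X` seen from `x ∈ B`: `r⁺ = min{d(x,y) : y ∉ B}`. -/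
noncomputable def parentR {X : Type*} [Fintype X] [DecidableEq X]
    (d : X → X → ℝ) (B : Finset X) (x : X) : ℝ :=
  if h : (Bᶜ : Finset X).Nonempty then Bᶜ.inf' h fun y => d x y else 0

/-- The parent ball `B⁺ = B(x, r⁺)` of `B ⊊ X`, computed from a base point `x ∈ B`. -/
noncomputable def parentB {X : Type*} [Fintype X] [DecidableEq X]
    (d : X → X → ℝ) (B : Finset X) (x : X) : Finset X :=
  uball d x (parentR d B x)

/-- The ultrametric Laplacian matrix:
`L x y = k(d(x,y))·m(y)` off the diagonal and `L x x = −Σ_{z ≠ x} k(d(x,z))·m(z)`. -/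
noncomputable def ultraLap {X : Type*} [Fintype X] [DecidableEq X]
    (d : X → X → ℝ) (k : ℝ → ℝ) (m : X → ℝ) : Matrix X X ℝ :=
  fun x y => if y = x then -(∑ z ∈ ({x}ᶜ : Finset X), k (d x z) * m z) else k (d x y) * m y

/-- The smallest ball containing `x` and `y` and having at least two elements:
`B(x, d(x,y))` for `x ≠ y`, and `B(x, min_{z ≠ x} d(x,z))` for `x = y`. -/
noncomputable def sball {X : Type*} [Fintype X] [DecidableEq X]
    (d : X → X → ℝ) (x y : X) : Finset X :=
  if x = y then
    (if h : (({x}ᶜ : Finset X)).Nonempty then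
      uball d x ((({x}ᶜ : Finset X)).inf' h fun z => d x z)
     else uball d x 0)
  else uball d x (d x y)

lemma mem_uball' {X : Type*} [Fintype X] {d : X → X → ℝ} {x z : X} {r : ℝ} :
    z ∈ uball d x r ↔ d x z ≤ r := by simp [uball]

lemma uball_recenter {X : Type*} [Fintype X] {d : X → X → ℝ}
    (hsymm : ∀ x y, d x y = d y x) (hultra : ∀ x y z, d x z ≤ max (d x y) (d y z))
    {x' x : X} {r : ℝ} (hx : d x' x ≤ r) : uball d x' r = uball d x r := by
  ext z
  simp only [mem_uball']
  constructor
  · intro h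
    calc d x z ≤ max (d x x') (d x' z) := hultra x x' z
    _ ≤ r := max_le (by rw [hsymm]; exact hx) h
  · intro h
    calc d x' z ≤ max (d x' x) (d x z) := hultra x' x z
    _ ≤ r := max_le hx h

lemma fdiam_uball' {X : Type*} [Fintype X] {d : X → X → ℝ}
    (hsymm : ∀ x y, d x y = d y x) (hultra : ∀ x y z, d x z ≤ max (d x y) (d y z))
    {x z : X} {r : ℝ} (hx : x ∈ uball d x r) (hz : z ∈ uball d x r) (hzr : d x z = r) :
    fdiam d (uball d x r) = r := by
  have hne : ((uball d x r) ×ˢ (uball d x r)).Nonempty :=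
    ⟨(x, z), mem_product.2 ⟨hx, hz⟩⟩
  rw [fdiam, dif_pos hne]
  apply le_antisymm
  · apply Finset.sup'_le
    rintro ⟨a, b⟩ hab
    rw [mem_product] at hab
    calc d a b ≤ max (d a x) (d x b) := hultra a x b
    _ ≤ r := max_le (by rw [hsymm]; exact mem_uball'.1 hab.1) (mem_uball'.1 hab.2)
  · exact le_trans (le_of_eq hzr.symm)
      (Finset.le_sup' (f := fun p : X × X => d p.1 p.2) (b := (x, z))
        (mem_product.2 ⟨hx, hz⟩))

lemma mass_pos' {X : Type*} [Fintype X] {m : X → ℝ} (hm : ∀ x, 0 < m x)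
    {B : Finset X} (hB : B.Nonempty) : 0 < mass m B :=
  Finset.sum_pos (fun i _ => hm i) hB

lemma key_univ {X : Type*} [Fintype X] [DecidableEq X] {d : X → X → ℝ}
    (m : X → ℝ) (hm : ∀ x, 0 < m x) (k : ℝ → ℝ) (x : X) :
    k (fdiam d (Finset.univ : Finset X)) =
      -(lamB d k m Finset.univ x) / mass m Finset.univ +
      ∑ T ∈ Finset.univ.filter
          (fun T : Finset X => IsBall d T ∧ (Finset.univ : Finset X) ⊆ T ∧ T ≠ Finset.univ),
        ((mass m T)⁻¹ - (mass m (parentB d T x))⁻¹) * lamB d k m (parentB d T x) x := by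
  have hfil : Finset.univ.filter
      (fun T : Finset X => IsBall d T ∧ (Finset.univ : Finset X) ⊆ T ∧ T ≠ Finset.univ) = ∅ := by
    apply Finset.filter_eq_empty_iff.mpr
    rintro T - ⟨-, hsub, hne⟩
    exact hne (Finset.univ_subset_iff.mp hsub)
  have hMpos : 0 < mass m (Finset.univ : Finset X) := mass_pos' hm ⟨x, mem_univ x⟩
  rw [hfil]
  simp only [Finset.sum_empty, add_zero, lamB, Finset.compl_univ, zero_add]
  field_simp

lemma key_main {X : Type*} [Fintype X] [DecidableEq X] {d : X → X → ℝ}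
    (hd0 : ∀ x y, d x y = 0 ↔ x = y) (hsymm : ∀ x y, d x y = d y x)
    (hultra : ∀ x y z, d x z ≤ max (d x y) (d y z))
    (m : X → ℝ) (hm : ∀ x, 0 < m x) (k : ℝ → ℝ) (x : X) :
    ∀ n : ℕ, ∀ B : Finset X, (Bᶜ).card ≤ n → x ∈ B → IsBall d B →
    k (fdiam d B) = -(lamB d k m B x) / mass m B +
      ∑ T ∈ Finset.univ.filter
          (fun T : Finset X => IsBall d T ∧ B ⊆ T ∧ T ≠ Finset.univ),
        ((mass m T)⁻¹ - (mass m (parentB d T x))⁻¹) * lamB d k m (parentB d T x) x := by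
  have hdnn : ∀ a b : X, 0 ≤ d a b := by
    intro a b
    have h := hultra a b a
    have haa : d a a = 0 := (hd0 a a).mpr rfl
    rw [haa, hsymm b a, max_self] at h
    exact h
  intro n
  induction n with
  | zero =>
    intro B hcard hxB hball
    have hBu : B = Finset.univ := by
      have h : Bᶜ = ∅ := Finset.card_eq_zero.mp (Nat.le_zero.mp hcard)
      have h2 := congrArg (·ᶜ) h
      simpa using h2
    subst hBu
    exact key_univ m hm k x
  | succ n ih =>
    intro B hcard hxB hball
    by_cases hBu : B = Finset.univ
    · subst hBu; exact key_univ m hm k x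
    obtain ⟨x', r, hr, rfl⟩ := hball
    have hx' : d x' x ≤ r := mem_uball'.1 hxB
    have hB : uball d x' r = uball d x r := uball_recenter hsymm hultra hx'
    rw [hB] at hxB hcard hBu ⊢
    set B := uball d x r with hBdef
    have hCex : ∃ w, w ∉ B := by
      by_contra h
      push_neg at h
      exact hBu (Finset.eq_univ_iff_forall.mpr h)
    obtain ⟨w₀, hw₀⟩ := hCex
    have hC : (Bᶜ : Finset X).Nonempty := ⟨w₀, Finset.mem_compl.2 hw₀⟩
    set rp := parentR d B x with hrpdef
    have hrp : rp = Bᶜ.inf' hC fun y => d x y := by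
      rw [hrpdef, parentR, dif_pos hC]
    obtain ⟨z₀, hz₀C, hz₀⟩ := Finset.exists_mem_eq_inf' hC (fun y => d x y)
    have hz₀' : d x z₀ = rp := by rw [hrp, hz₀]
    have hrrp : r < rp := by
      rw [hrp, Finset.lt_inf'_iff]
      intro b hb
      exact lt_of_not_ge (fun hle => (Finset.mem_compl.1 hb) (mem_uball'.2 hle))
    set Bp := uball d x rp with hBpdef
    have hparent : parentB d B x = Bp := rfl
    have hsub : B ⊆ Bp := fun z hz => mem_uball'.2 ((mem_uball'.1 hz).trans hrrp.le)
    have hz₀Bp : z₀ ∈ Bp := mem_uball'.2 (le_of_eq hz₀')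
    have hz₀B : z₀ ∉ B := Finset.mem_compl.1 hz₀C
    have hxBp : x ∈ Bp := hsub hxB
    have hcsub : (Bpᶜ : Finset X) ⊆ Bᶜ := Finset.compl_subset_compl.2 hsub
    have hlt : (Bpᶜ : Finset X).card < (Bᶜ : Finset X).card := by
      apply Finset.card_lt_card
      refine ⟨hcsub, fun h => ?_⟩
      exact (Finset.mem_compl.1 (h hz₀C)) hz₀Bp
    have hcard' : (Bpᶜ : Finset X).card ≤ n :=
      Nat.lt_succ_iff.mp (lt_of_lt_of_le hlt hcard)
    have hrp0 : 0 ≤ rp := hz₀' ▸ hdnn x z₀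
    have hBpball : IsBall d Bp := ⟨x, rp, hrp0, rfl⟩
    have hfd : fdiam d Bp = rp := by
      rw [hBpdef]
      exact fdiam_uball' hsymm hultra (mem_uball'.2 (((hd0 x x).mpr rfl).le.trans hrp0))
        (hBpdef ▸ hz₀Bp) hz₀'
    have hIH := ih Bp hcard' hxBp hBpball
    rw [hfd] at hIH
    -- split the index set
    have hsplit : Finset.univ.filter (fun T : Finset X => IsBall d T ∧ B ⊆ T ∧ T ≠ Finset.univ)
        = insert B (Finset.univ.filter
            (fun T : Finset X => IsBall d T ∧ Bp ⊆ T ∧ T ≠ Finset.univ)) := by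
      ext T
      simp only [Finset.mem_insert, Finset.mem_filter, Finset.mem_univ, true_and]
      constructor
      · rintro ⟨hTb, hBT, hTu⟩
        by_cases hTB : T = B
        · exact Or.inl hTB
        · refine Or.inr ⟨hTb, ?_, hTu⟩
          obtain ⟨c, s, hs, rfl⟩ := hTb
          have hxT : x ∈ uball d c s := hBT hxB
          have hT : uball d c s = uball d x s := uball_recenter hsymm hultra (mem_uball'.1 hxT)
          rw [hT] at hBT hTB ⊢
          have hss : B ⊂ uball d x s :=
            Finset.ssubset_iff_subset_ne.mpr ⟨hBT, fun h => hTB h.symm⟩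
          obtain ⟨w, hwT, hwB⟩ := Finset.exists_of_ssubset hss
          intro z hz
          have h1 : rp ≤ d x w := by
            rw [hrp]; exact Finset.inf'_le _ (Finset.mem_compl.2 hwB)
          exact mem_uball'.2 ((mem_uball'.1 hz).trans (h1.trans (mem_uball'.1 hwT)))
      · rintro (rfl | ⟨hTb, hBT, hTu⟩)
        · exact ⟨⟨x, r, hr, hBdef⟩, subset_rfl, hBu⟩
        · exact ⟨hTb, hsub.trans hBT, hTu⟩
    have hBnot : B ∉ Finset.univ.filter
        (fun T : Finset X => IsBall d T ∧ Bp ⊆ T ∧ T ≠ Finset.univ) := by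
      intro hmem
      rw [Finset.mem_filter] at hmem
      exact hz₀B (hmem.2.2.1 hz₀Bp)
    have hM : mass m B ≠ 0 := (mass_pos' hm ⟨x, hxB⟩).ne'
    have hN : mass m Bp ≠ 0 := (mass_pos' hm ⟨x, hxBp⟩).ne'
    -- the step identity
    have hsd : (Bᶜ \ Bpᶜ : Finset X) = Bp \ B := compl_sdiff_compl
    have hsum1 : ∑ y ∈ (Bᶜ \ Bpᶜ : Finset X), k (d x y) * m y
        + ∑ y ∈ (Bpᶜ : Finset X), k (d x y) * m y
        = ∑ y ∈ (Bᶜ : Finset X), k (d x y) * m y :=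
      Finset.sum_sdiff hcsub
    have hval : ∑ y ∈ Bp \ B, k (d x y) * m y = k rp * (mass m Bp - mass m B) := by
      have h1 : ∀ y ∈ Bp \ B, k (d x y) * m y = k rp * m y := by
        intro y hy
        obtain ⟨hyBp, hyB⟩ := Finset.mem_sdiff.1 hy
        have h2 : rp ≤ d x y := by
          rw [hrp]; exact Finset.inf'_le _ (Finset.mem_compl.2 hyB)
        rw [le_antisymm (mem_uball'.1 hyBp) h2]
      rw [Finset.sum_congr rfl h1, ← Finset.mul_sum]
      congr 1
      have h3 : ∑ y ∈ Bp \ B, m y + ∑ y ∈ B, m y = ∑ y ∈ Bp, m y :=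
        Finset.sum_sdiff hsub
      simp only [mass]
      linarith
    have hsum2 : ∑ y ∈ (Bᶜ : Finset X), k (d x y) * m y
        - ∑ y ∈ (Bpᶜ : Finset X), k (d x y) * m y = k rp * (mass m Bp - mass m B) := by
      rw [← hsd] at hval
      linarith
    have hstep : lamB d k m Bp x - lamB d k m B x
        = (k (fdiam d B) - k rp) * mass m B := by
      simp only [lamB, hfd]
      linear_combination hsum2
    -- assemble
    rw [hsplit, Finset.sum_insert hBnot, hparent]
    have hSig : (∑ T ∈ Finset.univ.filter
          (fun T : Finset X => IsBall d T ∧ Bp ⊆ T ∧ T ≠ Finset.univ),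
        ((mass m T)⁻¹ - (mass m (parentB d T x))⁻¹) * lamB d k m (parentB d T x) x)
        = k rp + lamB d k m Bp x / mass m Bp := by
      rw [neg_div] at hIH
      linarith
    rw [hSig]
    field_simp
    linear_combination (-(mass m Bp)) * hstep

/-- For `x ≠ y` and `B = B(x, d(x,y))` the smallest ball containing
both, the kernel is determined by the eigenvalues and the measure:
`k(d(x,y)) = −λ(B)/m(B) + Σ_{B ⊆ T ⊊ X} (1/m(T) − 1/m(T⁺))·λ(T⁺)`. -/
theorem stmt12 {X : Type*} [Fintype X] [DecidableEq X]
    (hX : 1 < Fintype.card X)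
    (d : X → X → ℝ)
    (hd0 : ∀ x y, d x y = 0 ↔ x = y)
    (hsymm : ∀ x y, d x y = d y x)
    (hultra : ∀ x y z, d x z ≤ max (d x y) (d y z))
    (m : X → ℝ) (hm : ∀ x, 0 < m x) (k : ℝ → ℝ)
    (x y : X) (hxy : x ≠ y) :
    k (d x y) =
      -(lamB d k m (uball d x (d x y)) x) / mass m (uball d x (d x y)) +
      ∑ T ∈ Finset.univ.filter
          (fun T : Finset X => IsBall d T ∧ uball d x (d x y) ⊆ T ∧ T ≠ Finset.univ),
        ((mass m T)⁻¹ - (mass m (parentB d T x))⁻¹) * lamB d k m (parentB d T x) x := by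
  have haa : d x x = 0 := (hd0 x x).mpr rfl
  have hdnn : 0 ≤ d x y := by
    have h := hultra x y x
    rw [haa, hsymm y x, max_self] at h
    exact h
  have hxB : x ∈ uball d x (d x y) := mem_uball'.2 (haa.le.trans hdnn)
  have hyB : y ∈ uball d x (d x y) := mem_uball'.2 le_rfl
  have hfd : fdiam d (uball d x (d x y)) = d x y :=
    fdiam_uball' hsymm hultra hxB hyB rfl
  have h := key_main hd0 hsymm hultra m hm k x ((uball d x (d x y))ᶜ.card)
    (uball d x (d x y)) le_rfl hxB ⟨x, d x y, hdnn, rfl⟩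
  rw [hfd] at h
  exact h
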